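/- Suppose φ, ψ : ℤ → ℂ satisfy the discrete Schrödinger equations -φ(n+2) - h(n)·φ(n+1) + a(n)·φ(n) = λ·φ(n) and -ψ(n+2) - h(n)·ψ(n+1) + a(n)·ψ(n) = b·ψ(n) for all n, with ψ nowhere zero. Define g(n) := ψ(n+1)/ψ(n), φ̂(n) := φ(n+1) - g(n)·φ(n), and ĥ(n) := h(n+1) + g(n+2) - g(n). Then -φ̂(n+2) - ĥ(n)·φ̂(n+1) + a(n)·φ̂(n) = λ·φ̂(n) for all n. -/

import Mathlib

private lemma darboux_aux (p0 p1 p2 p3 q0 q1 q2 q3 h0 h1 a0 a1 lam b : ℂ)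
    (hq0 : q0 ≠ 0) (hq1 : q1 ≠ 0) (hq2 : q2 ≠ 0)
    (e1 : p2 = a0 * p0 - lam * p0 - h0 * p1)
    (e2 : p3 = a1 * p1 - lam * p1 - h1 * p2)
    (f1 : q2 = a0 * q0 - b * q0 - h0 * q1)
    (f2 : q3 = a1 * q1 - b * q1 - h1 * q2) :
    -(p3 - q3 / q2 * p2) - (h1 + q3 / q2 - q1 / q0) * (p2 - q2 / q1 * p1)
      + a0 * (p1 - q1 / q0 * p0) = lam * (p1 - q1 / q0 * p0) := by
  field_simp [hq0, hq1, hq2]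
  subst e2 f2 e1 f1
  ring

/-- one-step Darboux transformation for the discrete Schrödinger
equation `-φ(n+2) - h(n)·φ(n+1) + a(n)·φ(n) = λ·φ(n)`. -/
theorem discrete_darboux_one_step
    (h a : ℤ → ℂ) (lam b : ℂ) (φ ψ : ℤ → ℂ)
    (hψ : ∀ n, ψ n ≠ 0)
    (hφsol : ∀ n, -φ (n + 2) - h n * φ (n + 1) + a n * φ n = lam * φ n)
    (hψsol : ∀ n, -ψ (n + 2) - h n * ψ (n + 1) + a n * ψ n = b * ψ n)
    (g φh hh : ℤ → ℂ)
    (hg : ∀ n, g n = ψ (n + 1) / ψ n)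
    (hφh : ∀ n, φh n = φ (n + 1) - g n * φ n)
    (hhh : ∀ n, hh n = h (n + 1) + g (n + 2) - g n) :
    ∀ n, -φh (n + 2) - hh n * φh (n + 1) + a n * φh n = lam * φh n := by
  intro n
  have e1 : φ (n + 2) = a n * φ n - lam * φ n - h n * φ (n + 1) := by
    have := hφsol n; linear_combination -this
  have e2 : φ (n + 3) = a (n + 1) * φ (n + 1) - lam * φ (n + 1)
      - h (n + 1) * φ (n + 2) := by
    have := hφsol (n + 1)
    rw [show n + 1 + 2 = n + 3 by ring, show n + 1 + 1 = n + 2 by ring] at this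
    linear_combination -this
  have f1 : ψ (n + 2) = a n * ψ n - b * ψ n - h n * ψ (n + 1) := by
    have := hψsol n; linear_combination -this
  have f2 : ψ (n + 3) = a (n + 1) * ψ (n + 1) - b * ψ (n + 1)
      - h (n + 1) * ψ (n + 2) := by
    have := hψsol (n + 1)
    rw [show n + 1 + 2 = n + 3 by ring, show n + 1 + 1 = n + 2 by ring] at this
    linear_combination -this
  rw [hφh (n + 2), hφh (n + 1), hφh n, hhh n, hg (n + 2), hg (n + 1), hg n,
    show n + 2 + 1 = n + 3 by ring, show n + 1 + 1 = n + 2 by ring]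
  exact darboux_aux (φ n) (φ (n + 1)) (φ (n + 2)) (φ (n + 3)) (ψ n) (ψ (n + 1))
    (ψ (n + 2)) (ψ (n + 3)) (h n) (h (n + 1)) (a n) (a (n + 1)) lam b
    (hψ n) (hψ (n + 1)) (hψ (n + 2)) e1 e2 f1 f2
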